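/- For a T1 topological space X the following conditions are equivalent: (1) X is not countably compact; (2) for every countable nonempty set A, X is not [𝒫(A)∖{A}, A]-compact; (3) there exist a countably infinite set A and a family B ⊆ 𝒫(A) containing all finite subsets of A such that X is not [B,A]-compact. -/

import Mathlib

/-- A topological space `X` is `[B,A]`-compact if every `A`-indexed family of open
sets covering `X` admits a subfamily indexed by some `H ∈ B` which still covers `X`. -/
def BACompact {A : Type*} (B : Set (Set A)) (X : Type*) [TopologicalSpace X] : Prop :=
  ∀ O : A → Set X, (∀ a, IsOpen (O a)) → (⋃ a, O a) = Set.univ →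
    ∃ H ∈ B, (⋃ a ∈ H, O a) = Set.univ

/-- `X` is countably compact if every countable open cover has a finite subcover. -/
def CountablyCompact (X : Type*) [TopologicalSpace X] : Prop :=
  ∀ 𝒰 : Set (Set X), 𝒰.Countable → (∀ U ∈ 𝒰, IsOpen U) → ⋃₀ 𝒰 = Set.univ →
    ∃ 𝒱 ⊆ 𝒰, 𝒱.Finite ∧ ⋃₀ 𝒱 = Set.univ

lemma key {X : Type*} [TopologicalSpace X] [T1Space X] (h : ¬ CountablyCompact X) :
    ∃ O : ℕ → Set X, (∀ k, IsOpen (O k)) ∧ (⋃ k, O k) = Set.univ ∧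
      ∃ x : ℕ → X, ∀ k j, x k ∈ O j ↔ j = k := by
  unfold CountablyCompact at h
  push_neg at h
  obtain ⟨𝒰, hcnt, hop, hcov, hnofin⟩ := h
  have hne : 𝒰.Nonempty := by
    rcases 𝒰.eq_empty_or_nonempty with he | hne
    · exfalso
      have := hnofin ∅ (Set.empty_subset _) Set.finite_empty
      rw [Set.sUnion_empty] at this
      rw [he, Set.sUnion_empty] at hcov
      exact this hcov
    · exact hne
  obtain ⟨U, hU⟩ := Set.Countable.exists_eq_range hcnt hne
  set V : ℕ → Set X := fun k => ⋃ i ∈ Set.Iic k, U i with hVdef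
  have hVopen : ∀ k, IsOpen (V k) := by
    intro k
    apply isOpen_biUnion
    intro i _
    exact hop _ (hU ▸ Set.mem_range_self i)
  have hVmono : Monotone V := by
    intro j k hjk
    exact Set.biUnion_subset_biUnion_left (Set.Iic_subset_Iic.mpr hjk)
  have hVne : ∀ k, V k ≠ Set.univ := by
    intro k hk
    apply hnofin (U '' Set.Iic k)
    · rw [hU]; exact Set.image_subset_range _ _
    · exact (Set.finite_Iic k).image _
    · rw [Set.sUnion_image]; exact hk
  have hVunion : (⋃ k, V k) = Set.univ := by
    apply Set.eq_univ_of_univ_subset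
    rw [← hcov, hU, Set.sUnion_range]
    apply Set.iUnion_subset
    intro i
    exact Set.subset_iUnion_of_subset i (Set.subset_biUnion_of_mem Set.self_mem_Iic)
  have hpick : ∀ k, ∃ z, z ∉ V k := by
    intro k
    rcases Set.ne_univ_iff_exists_notMem _ |>.mp (hVne k) with ⟨z, hz⟩
    exact ⟨z, hz⟩
  choose pick hpick using hpick
  have hidx : ∀ z : X, ∃ k, z ∈ V k := by
    intro z
    have : z ∈ ⋃ k, V k := hVunion ▸ Set.mem_univ z
    exact Set.mem_iUnion.mp this
  choose idx hidx using hidx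
  -- the recursive index sequence
  set n : ℕ → ℕ := fun k => Nat.rec 0 (fun _ nk => max (nk + 1) (idx (pick nk))) k with hn
  have hnsucc : ∀ k, n (k + 1) = max (n k + 1) (idx (pick (n k))) := fun k => rfl
  have hnsm : StrictMono n := by
    apply strictMono_nat_of_lt_succ
    intro k
    rw [hnsucc]
    exact lt_of_lt_of_le (Nat.lt_succ_self _) (le_max_left _ _)
  set x : ℕ → X := fun k => pick (n k) with hx
  have hxnot : ∀ k, x k ∉ V (n k) := fun k => hpick (n k)
  have hxmem : ∀ k, x k ∈ V (n (k + 1)) := by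
    intro k
    apply hVmono (le_max_right (n k + 1) (idx (pick (n k))))
    exact hidx (pick (n k))
  have hxlt : ∀ i j, i < j → x i ≠ x j := by
    intro i j hlt hij
    have : i + 1 ≤ j := hlt
    exact hxnot j (hij ▸ hVmono (hnsm.monotone this) (hxmem i))
  have hxinj : Function.Injective x := by
    intro i j hij
    rcases lt_trichotomy i j with hlt | heq | hgt
    · exact absurd hij (hxlt i j hlt)
    · exact heq
    · exact absurd hij.symm (hxlt j i hgt)
  -- x j ∈ V (n (t+1)) → j ≤ t
  have hbound : ∀ j t, x j ∈ V (n (t + 1)) → j ≤ t := by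
    intro j t hjt
    by_contra hgt
    exact hxnot j (hVmono (hnsm.monotone (by omega : t + 1 ≤ j)) hjt)
  have hSclosed : ∀ k, IsClosed (x '' {j | j ≠ k}) := by
    intro k
    rw [← isOpen_compl_iff, isOpen_iff_forall_mem_open]
    intro z hz
    set t := idx z
    have hzt : z ∈ V (n (t + 1)) :=
      hVmono (le_trans (Nat.le_succ t) (hnsm.le_apply)) (hidx z)
    refine ⟨V (n (t + 1)) \ x '' (Set.Iic t ∩ {j | j ≠ k}), ?_, ?_, ?_⟩
    · intro w hw hw'
      obtain ⟨j, hj, hje⟩ := hw'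
      exact hw.2 ⟨j, ⟨hbound j t (hje ▸ hw.1), hj⟩, hje⟩
    · exact (hVopen _).sdiff (((Set.finite_Iic t).inter_of_left _).image _).isClosed
    · exact ⟨hzt, fun hmem => hz (Set.image_mono (Set.inter_subset_right) hmem)⟩
  set O : ℕ → Set X := fun k => V (n (k + 1)) \ x '' {j | j ≠ k} with hO
  have hxO : ∀ k j, x k ∈ O j ↔ j = k := by
    intro k j
    constructor
    · intro hk
      by_contra hne'
      exact hk.2 ⟨k, fun h => hne' h.symm, rfl⟩
    · rintro rfl
      refine ⟨hxmem j, ?_⟩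
      rintro ⟨i, hi, hie⟩
      exact hi (hxinj hie)
  refine ⟨O, fun k => (hVopen _).sdiff (hSclosed k), ?_, x, hxO⟩
  apply Set.eq_univ_of_forall
  intro z
  rw [Set.mem_iUnion]
  by_cases hzx : ∃ j, x j = z
  · obtain ⟨j, rfl⟩ := hzx
    exact ⟨j, (hxO j j).mpr rfl⟩
  · refine ⟨idx z, ⟨hVmono (le_trans (Nat.le_succ _) hnsm.le_apply) (hidx z), ?_⟩⟩
    rintro ⟨j, _, hje⟩
    exact hzx ⟨j, hje⟩

theorem stmt_8 (X : Type*) [TopologicalSpace X] [T1Space X] :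
    (¬ CountablyCompact X ↔
      ∀ (A : Type), Countable A → Nonempty A →
        ¬ BACompact {H : Set A | H ≠ Set.univ} X) ∧
    (¬ CountablyCompact X ↔
      ∃ (A : Type), Countable A ∧ Infinite A ∧
        ∃ B : Set (Set A), (∀ H : Set A, H.Finite → H ∈ B) ∧ ¬ BACompact B X) := by
  have h1 : ¬ CountablyCompact X →
      ∀ (A : Type), Countable A → Nonempty A →
        ¬ BACompact {H : Set A | H ≠ Set.univ} X := by
    intro h A hc hne hBA
    obtain ⟨O, hOopen, hOcov, x, hxO⟩ := key h
    haveI := hc; haveI := hne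
    obtain ⟨f, hf⟩ := exists_surjective_nat A
    set O' : A → Set X := fun a => ⋃ k ∈ {k | f k = a}, O k with hO'
    obtain ⟨H, hH, hHcov⟩ := hBA O'
      (fun a => isOpen_biUnion fun k _ => hOopen k)
      (by
        apply Set.eq_univ_of_univ_subset
        rw [← hOcov]
        apply Set.iUnion_subset
        intro k
        intro z hz
        exact Set.mem_iUnion.mpr ⟨f k, Set.mem_biUnion rfl hz⟩)
    obtain ⟨a₀, ha₀⟩ := Set.ne_univ_iff_exists_notMem _ |>.mp hH
    obtain ⟨k, rfl⟩ := hf a₀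
    have : x k ∈ ⋃ a ∈ H, O' a := hHcov ▸ Set.mem_univ _
    rw [Set.mem_iUnion₂] at this
    obtain ⟨a, haH, hxa⟩ := this
    rw [hO'] at hxa
    simp only [Set.mem_iUnion] at hxa
    obtain ⟨j, hjf, hxj⟩ := hxa
    have : j = k := (hxO k j).mp hxj
    apply ha₀
    rw [← this, show f j = a from hjf]
    exact haH
  have h2 : (∀ (A : Type), Countable A → Nonempty A →
        ¬ BACompact {H : Set A | H ≠ Set.univ} X) →
      ∃ (A : Type), Countable A ∧ Infinite A ∧
        ∃ B : Set (Set A), (∀ H : Set A, H.Finite → H ∈ B) ∧ ¬ BACompact B X := by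
    intro h
    refine ⟨ℕ, inferInstance, inferInstance, {H : Set ℕ | H ≠ Set.univ},
      fun H hH => ?_, h ℕ inferInstance ⟨0⟩⟩
    intro he
    exact Set.infinite_univ (he ▸ hH)
  have h3 : (∃ (A : Type), Countable A ∧ Infinite A ∧
        ∃ B : Set (Set A), (∀ H : Set A, H.Finite → H ∈ B) ∧ ¬ BACompact B X) →
      ¬ CountablyCompact X := by
    rintro ⟨A, hc, hinf, B, hBfin, hnc⟩ hcc
    apply hnc
    intro O hOopen hOcov
    haveI := hc
    obtain ⟨𝒱, h𝒱sub, h𝒱fin, h𝒱cov⟩ := hcc (Set.range O)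
      (Set.countable_range O) (by rintro U ⟨a, rfl⟩; exact hOopen a)
      (by rw [Set.sUnion_range]; exact hOcov)
    classical
    haveI : Nonempty A := inferInstance
    have hch : ∀ V : Set X, ∃ a, V ∈ 𝒱 → O a = V := by
      intro V
      by_cases hV : V ∈ 𝒱
      · obtain ⟨a, ha⟩ := h𝒱sub hV
        exact ⟨a, fun _ => ha⟩
      · exact ⟨Classical.arbitrary A, fun h' => absurd h' hV⟩
    choose g hg using hch
    refine ⟨g '' 𝒱, hBfin _ (h𝒱fin.image g), ?_⟩
    apply Set.eq_univ_of_univ_subset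
    rw [← h𝒱cov]
    intro z hz
    obtain ⟨V, hV, hzV⟩ := hz
    exact Set.mem_biUnion ⟨V, hV, rfl⟩ (by rw [hg V hV]; exact hzV)
  exact ⟨⟨h1, fun p => h3 (h2 p)⟩, ⟨fun hp => h2 (h1 hp), h3⟩⟩
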